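/- Let e ≥ 2, let ν be a partition, let k ≥ 0, and let (s1, s2) ∈ ℤ² be a charge with s2 − s1 > |ν| + ek. Suppose that the charged bipartition |(ν, ∅), (s1, s2)⟩ has at most one good removable box (over all residues i ∈ ℤ/eℤ), and that any good removable box b of it satisfies ct(b) ≡ s2 (mod e). Then the charged bipartition |(ν ⊔ 1^{ek}, ∅), (s1, s2)⟩, obtained by appending a column of ek boxes of size 1 to ν, also has at most one good removable box, and any good removable box b′ of it satisfies ct(b′) ≡ s2 (mod e). -/

import Mathlib

namespace GUnBranching

/-- A partition, given by its (0-indexed) weakly decreasing, eventually zero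
sequence of parts: `part k` is the (k+1)-st part `λ_{k+1}`. -/
structure Partition where
  part : ℕ → ℕ
  antitone : ∀ i j : ℕ, i ≤ j → part j ≤ part i
  eventually_zero : ∃ N : ℕ, ∀ n : ℕ, N ≤ n → part n = 0

namespace Partition

/-- The set of boxes (row, column) (0-indexed) of the Young diagram of a partition. -/
def boxSet (p : Partition) : Set (ℕ × ℕ) := {b | b.2 < p.part b.1}

/-- The size `|λ|` of a partition: the number of boxes of its Young diagram. -/
noncomputable def size (p : Partition) : ℕ := p.boxSet.ncard

/-- The β-set `β(λ) = {λ_k - k + 1 : k ≥ 1}` (0-indexed: `{part k - k : k ∈ ℕ}`). -/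
def betaSet (p : Partition) : Set ℤ := {z | ∃ k : ℕ, z = (p.part k : ℤ) - k}

/-- The charged β-set `{λ_k + s - k + 1 : k ≥ 1}` of `(λ, s)`. -/
def chargedBetaSet (p : Partition) (s : ℤ) : Set ℤ :=
  {z | ∃ k : ℕ, z = (p.part k : ℤ) + s - k}

/-- The number of (nonzero) parts of a partition. -/
noncomputable def length (p : Partition) : ℕ := {k : ℕ | p.part k ≠ 0}.ncard

end Partition

/-- The empty partition `∅`. -/
def emptyPartition : Partition :=
  ⟨fun _ => 0, fun _ _ _ => le_rfl, ⟨0, fun _ _ => rfl⟩⟩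

/-- The partition `3^a 2^b 1^c` (a parts equal to 3, b parts equal to 2, c parts equal to 1). -/
def threeTwoOne (a b c : ℕ) : Partition where
  part k := if k < a then 3 else if k < a + b then 2 else if k < a + b + c then 1 else 0
  antitone i j h := by (try dsimp only); split_ifs <;> omega
  eventually_zero := ⟨a + b + c, fun n hn => by (try dsimp only); split_ifs <;> omega⟩

/-- The column partition `1^m`. -/
def column (m : ℕ) : Partition := threeTwoOne 0 0 m

/-- The staircase partition `Δ_t = (t, t-1, …, 2, 1)`. -/
def staircase (t : ℕ) : Partition where
  part k := t - k
  antitone i j h := Nat.sub_le_sub_left h t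
  eventually_zero := ⟨t, fun n hn => Nat.sub_eq_zero_of_le hn⟩

/-- The partition `Δ_t ⊔ 1^r` (staircase with a column of `r` extra parts equal to 1). -/
def staircaseColumn (t r : ℕ) : Partition where
  part k := if k < t then t - k else if k < t + r then 1 else 0
  antitone i j h := by (try dsimp only); split_ifs <;> omega
  eventually_zero := ⟨t + r, fun n hn => by (try dsimp only); split_ifs <;> omega⟩

/-- `p ⊔ 1^r` : append `r` extra parts equal to 1 to the partition `p`. -/
noncomputable def appendOnes (p : Partition) (r : ℕ) : Partition where
  part k := max (p.part k) (if k < p.length + r then 1 else 0)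
  antitone i j h := max_le_max (p.antitone i j h) (by split_ifs <;> omega)
  eventually_zero := by
    obtain ⟨N, hN⟩ := p.eventually_zero
    refine ⟨max N (p.length + r), fun n hn => ?_⟩
    have h1 : p.part n = 0 := hN n (le_trans (le_max_left _ _) hn)
    have h2 : ¬ n < p.length + r := by
      have := le_trans (le_max_right N (p.length + r)) hn
      omega
    simp [h1, h2]

/-- `mu` is obtained from `lam` by removing one rim `e`-hook: on β-sets, a bead `x`
with an empty spot at `x - e` is moved to `x - e`. -/
def RemoveHook (e : ℕ) (lam mu : Partition) : Prop :=
  ∃ x : ℤ, x ∈ lam.betaSet ∧ (x - e) ∉ lam.betaSet ∧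
    mu.betaSet = insert (x - e) (lam.betaSet \ {x})

/-- A partition is an `e`-core if no rim `e`-hook can be removed from it. -/
def IsECore (e : ℕ) (p : Partition) : Prop := ∀ mu : Partition, ¬ RemoveHook e p mu

/-- `core` is the `e`-core of `lam`: it is obtained from `lam` by repeatedly removing
rim `e`-hooks, and no further rim `e`-hook can be removed. -/
def HasECore (e : ℕ) (lam core : Partition) : Prop :=
  Relation.ReflTransGen (RemoveHook e) lam core ∧ IsECore e core

/-- `lam` and `mu` have the same `e`-core. -/
def SameECore (e : ℕ) (lam mu : Partition) : Prop :=
  ∃ core : Partition, HasECore e lam core ∧ HasECore e mu core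

/-- `(q1, q2)` is the 2-quotient of `lam`: the odd (resp. even) β-numbers of `lam`,
transformed by `v ↦ (v+1)/2` (resp. `v ↦ v/2`), form the β-set of `q1` (resp. `q2`)
for a suitable charge. -/
def IsTwoQuotient (lam q1 q2 : Partition) : Prop :=
  (∃ c : ℤ, q1.chargedBetaSet c = {z : ℤ | 2 * z - 1 ∈ lam.betaSet}) ∧
  (∃ c : ℤ, q2.chargedBetaSet c = {z : ℤ | 2 * z ∈ lam.betaSet})

/-- The charge `s_t`: `(-(t+1+e)/2, t/2)` for even `t`, `(-(t+1)/2, (t+e)/2)` for odd `t`. -/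
def tauCharge (e t : ℕ) : ℤ × ℤ :=
  if t % 2 = 0 then (-(((t : ℤ) + 1 + e) / 2), (t : ℤ) / 2)
  else (-(((t : ℤ) + 1) / 2), ((t : ℤ) + e) / 2)

/-- `bp` is the twisted 2-quotient `τ(lam)` of `lam`, a partition with 2-core `Δ_t`:
it is the 2-quotient for even `t` and the swapped 2-quotient for odd `t`; the
corresponding charge is `tauCharge e t`. -/
def IsTwistedQuotient (t : ℕ) (lam : Partition) (bp : Partition × Partition) : Prop :=
  HasECore 2 lam (staircase t) ∧
  (if t % 2 = 0 then IsTwoQuotient lam bp.1 bp.2 else IsTwoQuotient lam bp.2 bp.1)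

/-- The abacus of a charged bipartition: positions are (column, row) where row
`0 : Fin 2` is the bottom row (first component, charge `s.1`) and row `1 : Fin 2`
the top row (second component, charge `s.2`). -/
def abacus (bp : Partition × Partition) (s : ℤ × ℤ) : Set (ℤ × Fin 2) :=
  {b | b.1 ∈ (if b.2 = (0 : Fin 2) then bp.1.chargedBetaSet s.1 else bp.2.chargedBetaSet s.2)}

/-- `P` is an `e`-period of the abacus `A`: beads `(x, r 0), (x-1, r 1), …, (x-e+1, r (e-1))`
of `A` where `x` is the largest column containing a bead of `A`, `r i = 0` (bottom row)
whenever `(x - i, bottom)` is a bead of `A` (for `i < e-1`), and once in the bottom row the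
period stays in the bottom row. -/
def IsEPeriodOf (e : ℕ) (A P : Set (ℤ × Fin 2)) : Prop :=
  ∃ (x : ℤ) (r : ℕ → Fin 2),
    P = {b | ∃ i : ℕ, i < e ∧ b = ((x - i : ℤ), r i)} ∧
    (∀ i : ℕ, i < e → ((x - i : ℤ), r i) ∈ A) ∧
    (∀ b ∈ A, b.1 ≤ x) ∧
    (∀ i : ℕ, i + 1 < e → ((x - i : ℤ), (0 : Fin 2)) ∈ A → r i = 0) ∧
    (∀ i : ℕ, i + 1 < e → r i = 0 → r (i + 1) = 0)

/-- `P 0, P 1, P 2, …` is the sequence of `e`-periods of `A`: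
each `P k` is the `e`-period of `A` minus the previous periods. -/
def IsPeriodSeq (e : ℕ) (A : Set (ℤ × Fin 2)) (P : ℕ → Set (ℤ × Fin 2)) : Prop :=
  ∀ k : ℕ, IsEPeriodOf e (A \ ⋃ i ∈ Finset.range k, P i) (P k)

/-- The abacus `A` is totally `e`-periodic: the `k`-th `e`-period exists for every `k`. -/
def TotallyPeriodic (e : ℕ) (A : Set (ℤ × Fin 2)) : Prop :=
  ∃ P : ℕ → Set (ℤ × Fin 2), IsPeriodSeq e A P

/-- `P` is the `(k+1)`-st `e`-period of `A` (so `k = 0` gives the first `e`-period). -/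
def IsKthPeriod (e : ℕ) (A : Set (ℤ × Fin 2)) (k : ℕ) (P : Set (ℤ × Fin 2)) : Prop :=
  ∃ Q : ℕ → Set (ℤ × Fin 2),
    (∀ i : ℕ, i ≤ k → IsEPeriodOf e (A \ ⋃ j ∈ Finset.range i, Q j) (Q i)) ∧ Q k = P

/-- Shift a set of abacus positions one step to the right. -/
def shiftRight (P : Set (ℤ × Fin 2)) : Set (ℤ × Fin 2) := {b | (b.1 - 1, b.2) ∈ P}

/-- Edge of the `sl_∞`-crystal moving the `(k+1)`-st `e`-period one step to the right:
the shifted period must again be the `(k+1)`-st `e`-period of the resulting abacus. -/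
def SlInfEdgeAt (e : ℕ) (s : ℤ × ℤ) (k : ℕ) (lam mu : Partition × Partition) : Prop :=
  TotallyPeriodic e (abacus lam s) ∧ TotallyPeriodic e (abacus mu s) ∧
  ∃ P : Set (ℤ × Fin 2),
    IsKthPeriod e (abacus lam s) k P ∧
    abacus mu s = (abacus lam s \ P) ∪ shiftRight P ∧
    IsKthPeriod e (abacus mu s) k (shiftRight P)

/-- Edge of the `sl_∞`-crystal. -/
def SlInfEdge (e : ℕ) (s : ℤ × ℤ) (lam mu : Partition × Partition) : Prop :=
  ∃ k : ℕ, SlInfEdgeAt e s k lam mu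

/-- A source vertex of the `sl_∞`-crystal: a vertex (totally `e`-periodic abacus)
with no incoming edge. -/
def IsSlInfSource (e : ℕ) (s : ℤ × ℤ) (bp : Partition × Partition) : Prop :=
  TotallyPeriodic e (abacus bp s) ∧ ∀ lam : Partition × Partition, ¬ SlInfEdge e s lam bp

/-- A box of a bipartition: (component, row, column), all 0-indexed
(component `0 : Fin 2` is the first component `λ¹`). -/
abbrev Box := Fin 2 × ℕ × ℕ

/-- The component of a bipartition indexed by `j : Fin 2`. -/
def comp (bp : Partition × Partition) (j : Fin 2) : Partition :=
  if j = 0 then bp.1 else bp.2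

/-- `b` is a box of the bipartition `bp`. -/
def IsBoxOf (bp : Partition × Partition) (b : Box) : Prop :=
  b.2.2 < (comp bp b.1).part b.2.1

/-- The (charged) content `ct(b) = y - x + s_j` of a box `b = (j, x, y)`. -/
def content (s : ℤ × ℤ) (b : Box) : ℤ :=
  (b.2.2 : ℤ) - (b.2.1 : ℤ) + (if b.1 = 0 then s.1 else s.2)

/-- `b` is an addable box of the bipartition `bp`. -/
def IsAddable (bp : Partition × Partition) (b : Box) : Prop :=
  b.2.2 = (comp bp b.1).part b.2.1 ∧
  (b.2.1 = 0 ∨ (comp bp b.1).part b.2.1 < (comp bp b.1).part (b.2.1 - 1))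

/-- `b` is a removable box of the bipartition `bp`. -/
def IsRemovable (bp : Partition × Partition) (b : Box) : Prop :=
  b.2.2 + 1 = (comp bp b.1).part b.2.1 ∧
  (comp bp b.1).part (b.2.1 + 1) < (comp bp b.1).part b.2.1

/-- The total order on addable/removable boxes: `b ≤ b'` iff `b = b'`, or
`ct(b) < ct(b')`, or the contents are equal, `b` lies in the second component and
`b'` in the first. -/
def boxLE (s : ℤ × ℤ) (b b' : Box) : Prop :=
  b = b' ∨ content s b < content s b' ∨
    (content s b = content s b' ∧ b.1 = 1 ∧ b'.1 = 0)

/-- The set of addable or removable boxes of residue `i` (the letters of the `i`-word). -/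
def IWord (e : ℕ) (s : ℤ × ℤ) (bp : Partition × Partition) (i : ZMod e) : Set Box :=
  {b | (IsAddable bp b ∨ IsRemovable bp b) ∧ ((content s b : ZMod e) = i)}

/-- A removable box of residue `i` surviving the Kashiwara cancellation: reading the
`i`-word in increasing order and cancelling each removable box with a following addable
box (recursively cancelling adjacent removable-addable pairs), `b` is not cancelled.
Equivalently, every final segment of the `i`-word starting at `b` contains strictly
more removable than addable boxes. -/
def SurvivingRemovable (e : ℕ) (s : ℤ × ℤ) (bp : Partition × Partition)
    (i : ZMod e) (b : Box) : Prop :=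
  b ∈ IWord e s bp i ∧ IsRemovable bp b ∧
  ∀ c ∈ IWord e s bp i, boxLE s b c →
    {d : Box | d ∈ IWord e s bp i ∧ IsAddable bp d ∧ boxLE s b d ∧ boxLE s d c}.ncard <
    {d : Box | d ∈ IWord e s bp i ∧ IsRemovable bp d ∧ boxLE s b d ∧ boxLE s d c}.ncard

/-- The good removable `i`-box: the smallest removable `i`-box surviving the
Kashiwara cancellation. -/
def IsGoodRemovable (e : ℕ) (s : ℤ × ℤ) (bp : Partition × Partition)
    (i : ZMod e) (b : Box) : Prop :=
  SurvivingRemovable e s bp i b ∧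
  ∀ b' : Box, SurvivingRemovable e s bp i b' → boxLE s b b'

/-- An addable box of residue `i` surviving the Kashiwara cancellation. -/
def SurvivingAddable (e : ℕ) (s : ℤ × ℤ) (bp : Partition × Partition)
    (i : ZMod e) (b : Box) : Prop :=
  b ∈ IWord e s bp i ∧ IsAddable bp b ∧
  ∀ c ∈ IWord e s bp i, boxLE s c b →
    {d : Box | d ∈ IWord e s bp i ∧ IsRemovable bp d ∧ boxLE s c d ∧ boxLE s d b}.ncard <
    {d : Box | d ∈ IWord e s bp i ∧ IsAddable bp d ∧ boxLE s c d ∧ boxLE s d b}.ncard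

/-- The good addable `i`-box: the largest addable `i`-box surviving the
Kashiwara cancellation. -/
def IsGoodAddable (e : ℕ) (s : ℤ × ℤ) (bp : Partition × Partition)
    (i : ZMod e) (b : Box) : Prop :=
  SurvivingAddable e s bp i b ∧
  ∀ b' : Box, SurvivingAddable e s bp i b' → boxLE s b' b

/-- A source vertex of the `ŝl_e`-crystal: no good removable `i`-box for any residue `i`. -/
def IsSlESource (e : ℕ) (s : ℤ × ℤ) (bp : Partition × Partition) : Prop :=
  ∀ (i : ZMod e) (b : Box), ¬ IsGoodRemovable e s bp i b

/-- `bp'` is obtained from `bp` by adding the box `b`. -/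
def AddBox (bp : Partition × Partition) (b : Box) (bp' : Partition × Partition) : Prop :=
  if b.1 = 0 then
    bp'.2 = bp.2 ∧ bp'.1.part = Function.update bp.1.part b.2.1 (bp.1.part b.2.1 + 1)
  else
    bp'.1 = bp.1 ∧ bp'.2.part = Function.update bp.2.part b.2.1 (bp.2.part b.2.1 + 1)

/-- Dominance order: `Dominates mu la` means `la ⊴ mu`. -/
def Dominates (mu la : Partition) : Prop :=
  ∀ k : ℕ, ∑ i ∈ Finset.range k, la.part i ≤ ∑ i ∈ Finset.range k, mu.part i

/- ===== auxiliary lemmas ===== -/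

lemma fin_two (j : Fin 2) : j = 0 ∨ j = 1 := by
  fin_cases j
  · exact Or.inl rfl
  · exact Or.inr rfl

lemma Partition.ext' {p q : Partition} (h : p.part = q.part) : p = q := by
  cases p; cases q; simp_all

lemma lower_set_eq_Iio {S : Set ℕ} (hfin : S.Finite)
    (hlow : ∀ a b : ℕ, a ≤ b → b ∈ S → a ∈ S) : S = Set.Iio S.ncard := by
  ext x
  simp only [Set.mem_Iio]
  constructor
  · intro hx
    have h1 : Set.Iic x ⊆ S := fun y hy => hlow y x hy hx
    have h2 : (Set.Iic x).ncard ≤ S.ncard := Set.ncard_le_ncard h1 hfin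
    have h3 : (Set.Iic x).ncard = x + 1 := by
      rw [← Finset.coe_Iic, Set.ncard_coe_finset, Nat.card_Iic]
    omega
  · intro hx
    by_contra hc
    have h1 : S ⊆ Set.Iio x := by
      intro y hy
      simp only [Set.mem_Iio]
      by_contra hyx
      exact hc (hlow x y (by omega) hy)
    have h2 : S.ncard ≤ (Set.Iio x).ncard := Set.ncard_le_ncard h1 (Set.finite_Iio x)
    have h3 : (Set.Iio x).ncard = x := by
      rw [← Finset.coe_Iio, Set.ncard_coe_finset, Nat.card_Iio]
    omega

lemma Partition.part_ne_zero_iff (p : Partition) (x : ℕ) :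
    p.part x ≠ 0 ↔ x < p.length := by
  obtain ⟨N, hN⟩ := p.eventually_zero
  have hfin : {k : ℕ | p.part k ≠ 0}.Finite := by
    apply (Set.finite_Iio N).subset
    intro y hy
    simp only [Set.mem_Iio]
    by_contra hc
    exact hy (hN y (by omega))
  have hlow : ∀ a b : ℕ, a ≤ b → b ∈ {k : ℕ | p.part k ≠ 0} → a ∈ {k : ℕ | p.part k ≠ 0} := by
    intro a b hab hb
    have := p.antitone a b hab
    simp only [Set.mem_setOf_eq] at *
    omega
  have := lower_set_eq_Iio hfin hlow
  constructor
  · intro h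
    have : x ∈ {k : ℕ | p.part k ≠ 0} := h
    rwa [lower_set_eq_Iio hfin hlow, Set.mem_Iio] at this
  · intro h
    have : x ∈ Set.Iio ({k : ℕ | p.part k ≠ 0}.ncard) := h
    rw [← lower_set_eq_Iio hfin hlow] at this
    exact this

lemma appendOnes_part (ν : Partition) (m x : ℕ) :
    (appendOnes ν m).part x =
      if x < ν.length then ν.part x else if x < ν.length + m then 1 else 0 := by
  show max (ν.part x) (if x < ν.length + m then 1 else 0) = _
  have h1 := ν.part_ne_zero_iff x
  by_cases h : x < ν.length
  · have h2 : ν.part x ≠ 0 := h1.2 h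
    have h3 : x < ν.length + m := by omega
    simp only [if_pos h, if_pos h3]
    omega
  · have h2 : ν.part x = 0 := by by_contra hc; exact h (h1.1 hc)
    simp only [if_neg h, h2]
    split_ifs <;> omega

lemma isRemovable_mk (μ : Partition) (x y : ℕ) :
    IsRemovable (μ, emptyPartition) (0, x, y) ↔
      y + 1 = μ.part x ∧ μ.part (x + 1) < μ.part x := by
  simp [IsRemovable, comp]

lemma isAddable_mk (μ : Partition) (x y : ℕ) :
    IsAddable (μ, emptyPartition) (0, x, y) ↔
      y = μ.part x ∧ (x = 0 ∨ μ.part x < μ.part (x - 1)) := by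
  simp [IsAddable, comp]

lemma isRemovable_snd (μ : Partition) (x y : ℕ) :
    ¬ IsRemovable (μ, emptyPartition) (1, x, y) := by
  simp [IsRemovable, comp, emptyPartition]

lemma isAddable_snd (μ : Partition) (x y : ℕ) :
    IsAddable (μ, emptyPartition) (1, x, y) ↔ x = 0 ∧ y = 0 := by
  simp only [IsAddable, comp]
  norm_num [emptyPartition]
  tauto

lemma not_add_and_rem (bp : Partition × Partition) (b : Box)
    (ha : IsAddable bp b) (hr : IsRemovable bp b) : False := by
  obtain ⟨h1, -⟩ := ha
  obtain ⟨h2, -⟩ := hr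
  omega

lemma content_fst (s : ℤ × ℤ) (x y : ℕ) :
    content s (0, x, y) = (y : ℤ) - x + s.1 := by
  simp [content]

lemma content_snd (s : ℤ × ℤ) (x y : ℕ) :
    content s (1, x, y) = (y : ℤ) - x + s.2 := by
  norm_num [content]

lemma boxLE_refl (s : ℤ × ℤ) (b : Box) : boxLE s b b := Or.inl rfl

lemma boxLE_content_le {s : ℤ × ℤ} {b b' : Box} (h : boxLE s b b') :
    content s b ≤ content s b' := by
  rcases h with rfl | h | ⟨h, -⟩ <;> omega

lemma boxLE_of_ne_fst {s : ℤ × ℤ} {b b' : Box} (h : boxLE s b b') (h0 : b.1 = 0)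
    (hne : b ≠ b') : content s b < content s b' := by
  rcases h with rfl | h | ⟨-, h1, -⟩
  · exact absurd rfl hne
  · exact h
  · rw [h0] at h1; exact absurd h1 (by decide)

lemma boxLE_antisymm {s : ℤ × ℤ} {b b' : Box} (h : boxLE s b b') (h' : boxLE s b' b) :
    b = b' := by
  rcases h with rfl | h | ⟨h1, h2, h3⟩
  · rfl
  · rcases h' with rfl | h' | ⟨h1', -⟩ <;> omega
  · rcases h' with rfl | h' | ⟨-, h2', -⟩
    · rfl
    · omega
    · rw [h3] at h2'; exact absurd h2' (by decide)

lemma iword_finite (e : ℕ) (s : ℤ × ℤ) (bp : Partition × Partition) (i : ZMod e) :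
    (IWord e s bp i).Finite := by
  obtain ⟨N1, hN1⟩ := bp.1.eventually_zero
  obtain ⟨N2, hN2⟩ := bp.2.eventually_zero
  set N := N1 + N2 with hN
  set M := bp.1.part 0 + bp.2.part 0 with hM
  apply Set.Finite.subset
    ((Set.finite_univ (α := Fin 2)).prod ((Set.finite_Iic N).prod (Set.finite_Iic M)))
  rintro ⟨j, x, y⟩ ⟨hd, -⟩
  have hcomp : ∀ n, N ≤ n → (comp bp j).part n = 0 := by
    intro n hn
    rcases fin_two j with rfl | rfl
    · simp only [comp, if_pos rfl]; exact hN1 n (by omega)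
    · simp only [comp]; norm_num; exact hN2 n (by omega)
  have hpart0 : (comp bp j).part 0 ≤ M := by
    rcases fin_two j with rfl | rfl
    · simp only [comp]; norm_num; omega
    · simp only [comp]; norm_num; omega
  have hxy : x ≤ N ∧ y ≤ M := by
    rcases hd with ⟨h1, h2⟩ | ⟨h1, h2⟩
    · dsimp only at h1 h2
      constructor
      · rcases h2 with rfl | h2
        · omega
        · by_contra hc
          have := hcomp (x - 1) (by omega)
          omega
      · have := (comp bp j).antitone 0 x (by omega)
        omega
    · dsimp only at h1 h2
      constructor
      · by_contra hc
        have := hcomp x (by omega)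
        omega
      · have := (comp bp j).antitone 0 x (by omega)
        omega
  exact ⟨Set.mem_univ j, Set.mem_Iic.2 hxy.1, Set.mem_Iic.2 hxy.2⟩

section Transfer

variable {ν : Partition} {m : ℕ}

lemma remIff (hm : 1 ≤ m) (x y : ℕ)
    (hxy : 2 - (ν.length : ℤ) ≤ (y : ℤ) - (x : ℤ)) :
    IsRemovable (appendOnes ν m, emptyPartition) (0, x, y) ↔
      IsRemovable (ν, emptyPartition) (0, x, y) := by
  rw [isRemovable_mk, isRemovable_mk, appendOnes_part, appendOnes_part]
  have h1 := ν.part_ne_zero_iff x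
  have h2 := ν.part_ne_zero_iff (x + 1)
  have h3 := ν.antitone x (x + 1) (by omega)
  split_ifs <;> omega

lemma addIff (hm : 1 ≤ m) (x y : ℕ)
    (hxy : 2 - (ν.length : ℤ) ≤ (y : ℤ) - (x : ℤ)) :
    IsAddable (appendOnes ν m, emptyPartition) (0, x, y) ↔
      IsAddable (ν, emptyPartition) (0, x, y) := by
  rw [isAddable_mk, isAddable_mk, appendOnes_part, appendOnes_part]
  have h1 := ν.part_ne_zero_iff x
  have h2 := ν.part_ne_zero_iff (x - 1)
  have h3 := ν.antitone (x - 1) x (by omega)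
  split_ifs <;> omega

lemma rem_nu_bound (x y : ℕ) (h : IsRemovable (ν, emptyPartition) (0, x, y))
    (hne : ¬(x + 1 = ν.length ∧ y = 0)) :
    2 - (ν.length : ℤ) ≤ (y : ℤ) - (x : ℤ) := by
  rw [isRemovable_mk] at h
  have h1 := ν.part_ne_zero_iff x
  have h2 := ν.part_ne_zero_iff (x + 1)
  omega

lemma rem_lam_bound (hm : 1 ≤ m) (x y : ℕ)
    (h : IsRemovable (appendOnes ν m, emptyPartition) (0, x, y))
    (hne : ¬(x + 1 = ν.length + m ∧ y = 0)) :
    2 - (ν.length : ℤ) ≤ (y : ℤ) - (x : ℤ) := by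
  rw [isRemovable_mk, appendOnes_part, appendOnes_part] at h
  have h1 := ν.part_ne_zero_iff x
  have h2 := ν.part_ne_zero_iff (x + 1)
  split_ifs at h <;> omega

lemma add_nu_bound (x y : ℕ) (h : IsAddable (ν, emptyPartition) (0, x, y))
    (hne : ¬(x = ν.length ∧ y = 0)) :
    2 - (ν.length : ℤ) ≤ (y : ℤ) - (x : ℤ) := by
  rw [isAddable_mk] at h
  have h1 := ν.part_ne_zero_iff x
  have h2 := ν.part_ne_zero_iff (x - 1)
  omega

lemma add_lam_bound (hm : 1 ≤ m) (x y : ℕ)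
    (h : IsAddable (appendOnes ν m, emptyPartition) (0, x, y))
    (hne1 : ¬(x = ν.length ∧ y = 1)) (hne2 : ¬(x = ν.length + m ∧ y = 0)) :
    2 - (ν.length : ℤ) ≤ (y : ℤ) - (x : ℤ) := by
  rw [isAddable_mk, appendOnes_part, appendOnes_part] at h
  have h1 := ν.part_ne_zero_iff x
  have h2 := ν.part_ne_zero_iff (x - 1)
  split_ifs at h <;> omega

lemma addIff_box (hm : 1 ≤ m) (d : Box)
    (hd : d.1 = 0 → 2 - (ν.length : ℤ) ≤ (d.2.2 : ℤ) - (d.2.1 : ℤ)) :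
    IsAddable (appendOnes ν m, emptyPartition) d ↔ IsAddable (ν, emptyPartition) d := by
  obtain ⟨j, x, y⟩ := d
  rcases fin_two j with rfl | rfl
  · exact addIff hm x y (hd rfl)
  · rw [isAddable_snd, isAddable_snd]

lemma remIff_box (hm : 1 ≤ m) (d : Box)
    (hd : d.1 = 0 → 2 - (ν.length : ℤ) ≤ (d.2.2 : ℤ) - (d.2.1 : ℤ)) :
    IsRemovable (appendOnes ν m, emptyPartition) d ↔ IsRemovable (ν, emptyPartition) d := by
  obtain ⟨j, x, y⟩ := d
  rcases fin_two j with rfl | rfl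
  · exact remIff hm x y (hd rfl)
  · simp only [isRemovable_snd]

end Transfer

lemma removable_content_inj {s : ℤ × ℤ} {μ : Partition} {b b' : Box}
    (h : IsRemovable (μ, emptyPartition) b) (h' : IsRemovable (μ, emptyPartition) b')
    (hc : content s b = content s b') : b = b' := by
  obtain ⟨j, x, y⟩ := b
  obtain ⟨j', x', y'⟩ := b'
  rcases fin_two j with rfl | rfl
  swap
  · exact absurd h (isRemovable_snd μ x y)
  rcases fin_two j' with rfl | rfl
  swap
  · exact absurd h' (isRemovable_snd μ x' y')
  rw [isRemovable_mk] at h h'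
  rw [content_fst, content_fst] at hc
  rcases le_total x x' with hle | hle
  · have := μ.antitone x x' hle
    have : x = x' ∧ y = y' := by omega
    simp [this.1, this.2]
  · have := μ.antitone x' x hle
    have : x = x' ∧ y = y' := by omega
    simp [this.1, this.2]

lemma exists_good {e : ℕ} {s : ℤ × ℤ} {ν : Partition} {i : ZMod e} {b : Box}
    (hb : SurvivingRemovable e s (ν, emptyPartition) i b) :
    ∃ bg : Box, IsGoodRemovable e s (ν, emptyPartition) i bg := by
  set S := {b' : Box | SurvivingRemovable e s (ν, emptyPartition) i b'} with hS
  have hfin : S.Finite := (iword_finite e s (ν, emptyPartition) i).subset (fun b' hb' => hb'.1)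
  have hne : S.Nonempty := ⟨b, hb⟩
  obtain ⟨bg, hbgS, hmin⟩ := Set.exists_min_image S (content s) hfin hne
  refine ⟨bg, hbgS, fun b' hb' => ?_⟩
  by_cases hbb : bg = b'
  · exact Or.inl hbb
  · have hle := hmin b' hb'
    rcases lt_or_eq_of_le hle with h2 | h2
    · exact Or.inr (Or.inl h2)
    · exact absurd (removable_content_inj hbgS.2.1 hb'.2.1 h2) hbb

lemma mem_iword_iff {e : ℕ} {s : ℤ × ℤ} {bp : Partition × Partition} {i : ZMod e} {d : Box} :
    d ∈ IWord e s bp i ↔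
      (IsAddable bp d ∨ IsRemovable bp d) ∧ ((content s d : ZMod e) = i) := Iff.rfl

lemma res_shift {e m : ℕ} (hdvd : ((m : ℕ) : ZMod e) = 0) {a bz : ℤ} (h : bz = a - m) :
    ((a : ZMod e)) = ((bz : ZMod e)) := by
  subst h
  push_cast
  rw [hdvd]
  ring

lemma surviving_transfer {e : ℕ} {s : ℤ × ℤ} {ν : Partition} {m : ℕ}
    (hm : 1 ≤ m) (hdvd : ((m : ℕ) : ZMod e) = 0) (hss : s.1 < s.2)
    {i : ZMod e} {b : Box}
    (hb : SurvivingRemovable e s (appendOnes ν m, emptyPartition) i b) :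
    ∃ b' : Box, SurvivingRemovable e s (ν, emptyPartition) i b' := by
  obtain ⟨hbW, hbR, hbcond⟩ := hb
  obtain ⟨j, x, y⟩ := b
  rcases fin_two j with rfl | rfl
  swap
  · exact absurd hbR (isRemovable_snd _ x y)
  by_cases hR0 : x + 1 = ν.length + m ∧ y = 0
  · obtain ⟨hx, hy⟩ := hR0
    subst hy
    by_cases h2a : 1 ≤ ν.length ∧ ν.part (ν.length - 1) = 1
    · -- ν ends with a part equal to 1: the bottom removable box moves up by m rows
      obtain ⟨hl1, hl2⟩ := h2a
      set t := ν.length - 1 with ht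
      have htl : t + 1 = ν.length := by omega
      have hxt : x = t + m := by omega
      have hRt : IsRemovable (ν, emptyPartition) (0, t, 0) := by
        rw [isRemovable_mk]
        have h0 := ν.part_ne_zero_iff (t + 1)
        omega
      have hrest : ((content s ((0 : Fin 2), t, 0) : ℤ) : ZMod e) = i := by
        rw [← hbW.2]
        apply res_shift hdvd
        rw [content_fst, content_fst]
        omega
      refine ⟨(0, t, 0), ⟨Or.inr hRt, hrest⟩, hRt, ?_⟩
      intro c hc hbc
      by_cases hcb : c = ((0 : Fin 2), t, 0)
      · subst hcb
        have hAe : {d : Box | d ∈ IWord e s (ν, emptyPartition) i ∧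
              IsAddable (ν, emptyPartition) d ∧ boxLE s (0, t, 0) d ∧ boxLE s d (0, t, 0)}
            = ∅ := by
          ext d
          simp only [Set.mem_setOf_eq, Set.mem_empty_iff_false, iff_false, not_and]
          rintro ⟨-, hres⟩ hAd hd1 hd2
          exact absurd (boxLE_antisymm hd1 hd2 ▸ hAd) (fun h => not_add_and_rem _ _ h hRt)
        have hRe : {d : Box | d ∈ IWord e s (ν, emptyPartition) i ∧
              IsRemovable (ν, emptyPartition) d ∧ boxLE s (0, t, 0) d ∧ boxLE s d (0, t, 0)}
            = {((0 : Fin 2), t, 0)} := by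
          ext d
          simp only [Set.mem_setOf_eq, Set.mem_singleton_iff]
          constructor
          · rintro ⟨-, -, hd1, hd2⟩
            exact (boxLE_antisymm hd1 hd2).symm
          · rintro rfl
            exact ⟨⟨Or.inr hRt, hrest⟩, hRt, boxLE_refl s _, boxLE_refl s _⟩
        rw [hAe, hRe, Set.ncard_empty, Set.ncard_singleton]
        omega
      · have hctlt : content s ((0 : Fin 2), t, 0) < content s c :=
          boxLE_of_ne_fst hbc rfl (fun h => hcb h.symm)
        have hgap : ∀ d : Box, content s ((0 : Fin 2), t, 0) < content s d → d.1 = 0 →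
            2 - (ν.length : ℤ) ≤ (d.2.2 : ℤ) - (d.2.1 : ℤ) := by
          intro d hd h0
          obtain ⟨j', u, v⟩ := d
          rcases fin_two j' with rfl | rfl
          · rw [content_fst, content_fst] at hd
            dsimp only
            omega
          · exact absurd h0 (by exact (by decide : ¬(1 : Fin 2) = 0))
        have hcb0 := hgap c hctlt
        rw [mem_iword_iff] at hc
        have hcL : c ∈ IWord e s (appendOnes ν m, emptyPartition) i := by
          rw [mem_iword_iff]
          obtain ⟨hc1, hc2⟩ := hc
          refine ⟨?_, hc2⟩
          rcases hc1 with h | h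
          · exact Or.inl ((addIff_box hm c hcb0).mpr h)
          · exact Or.inr ((remIff_box hm c hcb0).mpr h)
        have hbc' : boxLE s (0, x, 0) c := by
          refine Or.inr (Or.inl ?_)
          have h9 : content s ((0 : Fin 2), x, 0) < content s ((0 : Fin 2), t, 0) := by
            rw [content_fst, content_fst]; omega
          omega
        have hcount := hbcond c hcL hbc'
        have hA : {d : Box | d ∈ IWord e s (ν, emptyPartition) i ∧
              IsAddable (ν, emptyPartition) d ∧ boxLE s (0, t, 0) d ∧ boxLE s d c}
            = {d : Box | d ∈ IWord e s (appendOnes ν m, emptyPartition) i ∧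
              IsAddable (appendOnes ν m, emptyPartition) d ∧ boxLE s (0, x, 0) d ∧ boxLE s d c} := by
          ext d
          simp only [Set.mem_setOf_eq]
          constructor
          · rintro ⟨⟨-, hres⟩, hAd, hd1, hd2⟩
            have hdne : ((0 : Fin 2), t, 0) ≠ d :=
              fun h => not_add_and_rem _ _ hAd (h ▸ hRt)
            have hlt : content s ((0 : Fin 2), t, 0) < content s d :=
              boxLE_of_ne_fst hd1 rfl hdne
            obtain ⟨j', u, v⟩ := d
            rcases fin_two j' with rfl | rfl
            · have hbound' : 2 - (ν.length : ℤ) ≤ (v : ℤ) - u := hgap (0, u, v) hlt rfl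
              refine ⟨⟨Or.inl ((addIff hm u v hbound').mpr hAd), hres⟩,
                (addIff hm u v hbound').mpr hAd, ?_, hd2⟩
              refine Or.inr (Or.inl ?_)
              rw [content_fst, content_fst] at hlt ⊢
              omega
            · obtain ⟨hu, hv⟩ := (isAddable_snd ν u v).mp hAd
              subst hu; subst hv
              refine ⟨⟨Or.inl ((isAddable_snd _ 0 0).mpr ⟨rfl, rfl⟩), hres⟩,
                (isAddable_snd _ 0 0).mpr ⟨rfl, rfl⟩, ?_, hd2⟩
              refine Or.inr (Or.inl ?_)
              rw [content_fst, content_snd]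
              omega
          · rintro ⟨⟨-, hres⟩, hAd, hd1, hd2⟩
            have hdne : ((0 : Fin 2), x, 0) ≠ d :=
              fun h => not_add_and_rem _ _ hAd (h ▸ hbR)
            have hlt : content s ((0 : Fin 2), x, 0) < content s d :=
              boxLE_of_ne_fst hd1 rfl hdne
            obtain ⟨j', u, v⟩ := d
            rcases fin_two j' with rfl | rfl
            · have hne1 : ¬(u = ν.length ∧ v = 1) := by
                rintro ⟨rfl, rfl⟩
                rw [isAddable_mk, appendOnes_part, appendOnes_part] at hAd
                have h1' := ν.part_ne_zero_iff (ν.length - 1)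
                rw [← ht] at hAd h1'
                split_ifs at hAd <;> omega
              have hne2 : ¬(u = ν.length + m ∧ v = 0) := by
                rintro ⟨rfl, rfl⟩
                rw [content_fst, content_fst] at hlt
                omega
              have hbound' := add_lam_bound hm u v hAd hne1 hne2
              refine ⟨⟨Or.inl ((addIff hm u v hbound').mp hAd), hres⟩,
                (addIff hm u v hbound').mp hAd, ?_, hd2⟩
              refine Or.inr (Or.inl ?_)
              rw [content_fst, content_fst]
              omega
            · obtain ⟨hu, hv⟩ := (isAddable_snd _ u v).mp hAd
              subst hu; subst hv
              refine ⟨⟨Or.inl ((isAddable_snd ν 0 0).mpr ⟨rfl, rfl⟩), hres⟩,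
                (isAddable_snd ν 0 0).mpr ⟨rfl, rfl⟩, ?_, hd2⟩
              refine Or.inr (Or.inl ?_)
              rw [content_fst, content_snd]
              omega
        have hX : {d : Box | d ∈ IWord e s (ν, emptyPartition) i ∧
              IsRemovable (ν, emptyPartition) d ∧ boxLE s (0, t, 0) d ∧ boxLE s d c}
                \ {((0 : Fin 2), t, 0)}
            = {d : Box | d ∈ IWord e s (appendOnes ν m, emptyPartition) i ∧
              IsRemovable (appendOnes ν m, emptyPartition) d ∧ boxLE s (0, x, 0) d ∧ boxLE s d c}
                \ {((0 : Fin 2), x, 0)} := by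
          ext d
          simp only [Set.mem_diff, Set.mem_setOf_eq, Set.mem_singleton_iff]
          constructor
          · rintro ⟨⟨⟨-, hres⟩, hRd, hd1, hd2⟩, hdne⟩
            have hlt : content s ((0 : Fin 2), t, 0) < content s d :=
              boxLE_of_ne_fst hd1 rfl (fun h => hdne h.symm)
            obtain ⟨j', u, v⟩ := d
            rcases fin_two j' with rfl | rfl
            swap
            · exact absurd hRd (isRemovable_snd _ u v)
            have hbound' : 2 - (ν.length : ℤ) ≤ (v : ℤ) - u := hgap (0, u, v) hlt rfl
            refine ⟨⟨⟨Or.inr ((remIff hm u v hbound').mpr hRd), hres⟩,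
              (remIff hm u v hbound').mpr hRd, ?_, hd2⟩, ?_⟩
            · refine Or.inr (Or.inl ?_)
              rw [content_fst, content_fst]
              omega
            · intro h
              simp only [Prod.mk.injEq] at h
              omega
          · rintro ⟨⟨⟨-, hres⟩, hRd, hd1, hd2⟩, hdne⟩
            have hlt : content s ((0 : Fin 2), x, 0) < content s d :=
              boxLE_of_ne_fst hd1 rfl (fun h => hdne h.symm)
            obtain ⟨j', u, v⟩ := d
            rcases fin_two j' with rfl | rfl
            swap
            · exact absurd hRd (isRemovable_snd _ u v)
            have hneb : ¬(u + 1 = ν.length + m ∧ v = 0) := by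
              rintro ⟨h1', rfl⟩
              exact hdne (congrArg (fun n => ((0 : Fin 2), n, (0 : ℕ))) (show u = x by omega))
            have hbound' := rem_lam_bound hm u v hRd hneb
            refine ⟨⟨⟨Or.inr ((remIff hm u v hbound').mp hRd), hres⟩,
              (remIff hm u v hbound').mp hRd, ?_, hd2⟩, ?_⟩
            · refine Or.inr (Or.inl ?_)
              rw [content_fst, content_fst]
              omega
            · intro h
              simp only [Prod.mk.injEq] at h
              omega
        have hmemn : ((0 : Fin 2), t, 0) ∈ {d : Box | d ∈ IWord e s (ν, emptyPartition) i ∧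
              IsRemovable (ν, emptyPartition) d ∧ boxLE s (0, t, 0) d ∧ boxLE s d c} :=
          ⟨⟨Or.inr hRt, hrest⟩, hRt, boxLE_refl s _, hbc⟩
        have hmeml : ((0 : Fin 2), x, 0) ∈ {d : Box | d ∈ IWord e s (appendOnes ν m, emptyPartition) i ∧
              IsRemovable (appendOnes ν m, emptyPartition) d ∧ boxLE s (0, x, 0) d ∧ boxLE s d c} :=
          ⟨hbW, hbR, boxLE_refl s _, hbc'⟩
        have hfinn : {d : Box | d ∈ IWord e s (ν, emptyPartition) i ∧
              IsRemovable (ν, emptyPartition) d ∧ boxLE s (0, t, 0) d ∧ boxLE s d c}.Finite :=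
          (iword_finite e s (ν, emptyPartition) i).subset (fun d hd => hd.1)
        have hfinl : {d : Box | d ∈ IWord e s (appendOnes ν m, emptyPartition) i ∧
              IsRemovable (appendOnes ν m, emptyPartition) d ∧
              boxLE s (0, x, 0) d ∧ boxLE s d c}.Finite :=
          (iword_finite e s (appendOnes ν m, emptyPartition) i).subset (fun d hd => hd.1)
        have c1 : {d : Box | d ∈ IWord e s (ν, emptyPartition) i ∧
              IsRemovable (ν, emptyPartition) d ∧ boxLE s (0, t, 0) d ∧ boxLE s d c}.ncard
            = ({d : Box | d ∈ IWord e s (ν, emptyPartition) i ∧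
              IsRemovable (ν, emptyPartition) d ∧ boxLE s (0, t, 0) d ∧ boxLE s d c}
                \ {((0 : Fin 2), t, 0)}).ncard + 1 := by
          conv_lhs => rw [show {d : Box | d ∈ IWord e s (ν, emptyPartition) i ∧
              IsRemovable (ν, emptyPartition) d ∧ boxLE s (0, t, 0) d ∧ boxLE s d c}
            = insert ((0 : Fin 2), t, 0) ({d : Box | d ∈ IWord e s (ν, emptyPartition) i ∧
              IsRemovable (ν, emptyPartition) d ∧ boxLE s (0, t, 0) d ∧ boxLE s d c}
                \ {((0 : Fin 2), t, 0)}) from by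
            rw [Set.insert_diff_singleton, Set.insert_eq_self.mpr hmemn]]
          exact Set.ncard_insert_of_notMem (fun h => h.2 rfl) hfinn.diff
        have c2 : {d : Box | d ∈ IWord e s (appendOnes ν m, emptyPartition) i ∧
              IsRemovable (appendOnes ν m, emptyPartition) d ∧
              boxLE s (0, x, 0) d ∧ boxLE s d c}.ncard
            = ({d : Box | d ∈ IWord e s (appendOnes ν m, emptyPartition) i ∧
              IsRemovable (appendOnes ν m, emptyPartition) d ∧
              boxLE s (0, x, 0) d ∧ boxLE s d c} \ {((0 : Fin 2), x, 0)}).ncard + 1 := by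
          conv_lhs => rw [show {d : Box | d ∈ IWord e s (appendOnes ν m, emptyPartition) i ∧
              IsRemovable (appendOnes ν m, emptyPartition) d ∧
              boxLE s (0, x, 0) d ∧ boxLE s d c}
            = insert ((0 : Fin 2), x, 0) ({d : Box | d ∈ IWord e s (appendOnes ν m, emptyPartition) i ∧
              IsRemovable (appendOnes ν m, emptyPartition) d ∧
              boxLE s (0, x, 0) d ∧ boxLE s d c} \ {((0 : Fin 2), x, 0)}) from by
            rw [Set.insert_diff_singleton, Set.insert_eq_self.mpr hmeml]]
          exact Set.ncard_insert_of_notMem (fun h => h.2 rfl) hfinl.diff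
        rw [hA, c1, hX, ← c2]
        exact hcount
    · -- ν does not end with a part equal to 1: the bottom box of the column cancels
      exfalso
      have hA0 : IsAddable (appendOnes ν m, emptyPartition) (0, ν.length, 1) := by
        rw [isAddable_mk, appendOnes_part, appendOnes_part]
        have h1' := ν.part_ne_zero_iff (ν.length - 1)
        constructor
        · split_ifs <;> omega
        · split_ifs <;> omega
      have hresA : ((content s ((0 : Fin 2), ν.length, 1) : ℤ) : ZMod e) = i := by
        rw [← hbW.2]
        apply res_shift hdvd
        rw [content_fst, content_fst]
        omega
      have hbA0 : boxLE s (0, x, 0) (0, ν.length, 1) := by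
        refine Or.inr (Or.inl ?_)
        rw [content_fst, content_fst]
        omega
      have hcount := hbcond (0, ν.length, 1) ⟨Or.inl hA0, hresA⟩ hbA0
      have hRe : {d : Box | d ∈ IWord e s (appendOnes ν m, emptyPartition) i ∧
            IsRemovable (appendOnes ν m, emptyPartition) d ∧
            boxLE s (0, x, 0) d ∧ boxLE s d (0, ν.length, 1)}
          = {((0 : Fin 2), x, 0)} := by
        ext d
        simp only [Set.mem_setOf_eq, Set.mem_singleton_iff]
        constructor
        · rintro ⟨-, hRd, hd1, hd2⟩
          by_contra hne
          have hlt : content s ((0 : Fin 2), x, 0) < content s d :=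
            boxLE_of_ne_fst hd1 rfl (fun h => hne h.symm)
          obtain ⟨j', u, v⟩ := d
          rcases fin_two j' with rfl | rfl
          swap
          · exact absurd hRd (isRemovable_snd _ u v)
          have hneb : ¬(u + 1 = ν.length + m ∧ v = 0) := by
            rintro ⟨h1', rfl⟩
            exact hne (congrArg (fun n => ((0 : Fin 2), n, (0 : ℕ))) (show u = x by omega))
          have hbound' := rem_lam_bound hm u v hRd hneb
          have hltA : content s ((0 : Fin 2), u, v) <
              content s ((0 : Fin 2), ν.length, 1) :=
            boxLE_of_ne_fst hd2 rfl (fun h => not_add_and_rem _ _ hA0 (h ▸ hRd))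
          rw [content_fst, content_fst] at hltA
          omega
        · rintro rfl
          exact ⟨hbW, hbR, boxLE_refl s _, hbA0⟩
      have hfinA : {d : Box | d ∈ IWord e s (appendOnes ν m, emptyPartition) i ∧
            IsAddable (appendOnes ν m, emptyPartition) d ∧
            boxLE s (0, x, 0) d ∧ boxLE s d (0, ν.length, 1)}.Finite :=
        (iword_finite e s (appendOnes ν m, emptyPartition) i).subset (fun d hd => hd.1)
      have hposA : 0 < {d : Box | d ∈ IWord e s (appendOnes ν m, emptyPartition) i ∧
            IsAddable (appendOnes ν m, emptyPartition) d ∧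
            boxLE s (0, x, 0) d ∧ boxLE s d (0, ν.length, 1)}.ncard :=
        (Set.ncard_pos hfinA).mpr
          ⟨(0, ν.length, 1), ⟨Or.inl hA0, hresA⟩, hA0, hbA0, boxLE_refl s _⟩
      rw [hRe, Set.ncard_singleton] at hcount
      omega
  · -- generic case : b is not the bottom box of the new column
    have hbound : 2 - (ν.length : ℤ) ≤ (y : ℤ) - (x : ℤ) := rem_lam_bound hm x y hbR hR0
    have hbd : ∀ d : Box, boxLE s (0, x, y) d → d.1 = 0 →
        2 - (ν.length : ℤ) ≤ (d.2.2 : ℤ) - (d.2.1 : ℤ) := by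
      intro d hled h0
      by_cases hdb : ((0 : Fin 2), x, y) = d
      · rw [← hdb]; exact hbound
      · have hlt := boxLE_of_ne_fst hled rfl hdb
        obtain ⟨j', u, v⟩ := d
        rcases fin_two j' with rfl | rfl
        · rw [content_fst, content_fst] at hlt
          dsimp only
          omega
        · exact absurd h0 (by exact (by decide : ¬(1 : Fin 2) = 0))
    have hbRν : IsRemovable (ν, emptyPartition) (0, x, y) :=
      (remIff hm x y hbound).mp hbR
    refine ⟨(0, x, y), ⟨Or.inr hbRν, hbW.2⟩, hbRν, ?_⟩
    intro c hc hbc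
    have hcb := hbd c hbc
    rw [mem_iword_iff] at hc
    have hcL : c ∈ IWord e s (appendOnes ν m, emptyPartition) i := by
      rw [mem_iword_iff]
      obtain ⟨hc1, hc2⟩ := hc
      refine ⟨?_, hc2⟩
      rcases hc1 with h | h
      · exact Or.inl ((addIff_box hm c hcb).mpr h)
      · exact Or.inr ((remIff_box hm c hcb).mpr h)
    have hcount := hbcond c hcL hbc
    have hA : {d : Box | d ∈ IWord e s (ν, emptyPartition) i ∧
          IsAddable (ν, emptyPartition) d ∧ boxLE s (0, x, y) d ∧ boxLE s d c}
        = {d : Box | d ∈ IWord e s (appendOnes ν m, emptyPartition) i ∧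
          IsAddable (appendOnes ν m, emptyPartition) d ∧ boxLE s (0, x, y) d ∧ boxLE s d c} := by
      ext d
      simp only [Set.mem_setOf_eq]
      constructor
      · rintro ⟨⟨-, hres⟩, hAd, hd1, hd2⟩
        have hbd' := hbd d hd1
        exact ⟨⟨Or.inl ((addIff_box hm d hbd').mpr hAd), hres⟩,
          (addIff_box hm d hbd').mpr hAd, hd1, hd2⟩
      · rintro ⟨⟨-, hres⟩, hAd, hd1, hd2⟩
        have hbd' := hbd d hd1
        exact ⟨⟨Or.inl ((addIff_box hm d hbd').mp hAd), hres⟩,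
          (addIff_box hm d hbd').mp hAd, hd1, hd2⟩
    have hR : {d : Box | d ∈ IWord e s (ν, emptyPartition) i ∧
          IsRemovable (ν, emptyPartition) d ∧ boxLE s (0, x, y) d ∧ boxLE s d c}
        = {d : Box | d ∈ IWord e s (appendOnes ν m, emptyPartition) i ∧
          IsRemovable (appendOnes ν m, emptyPartition) d ∧ boxLE s (0, x, y) d ∧ boxLE s d c} := by
      ext d
      simp only [Set.mem_setOf_eq]
      constructor
      · rintro ⟨⟨-, hres⟩, hRd, hd1, hd2⟩
        have hbd' := hbd d hd1
        exact ⟨⟨Or.inr ((remIff_box hm d hbd').mpr hRd), hres⟩,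
          (remIff_box hm d hbd').mpr hRd, hd1, hd2⟩
      · rintro ⟨⟨-, hres⟩, hRd, hd1, hd2⟩
        have hbd' := hbd d hd1
        exact ⟨⟨Or.inr ((remIff_box hm d hbd').mp hRd), hres⟩,
          (remIff_box hm d hbd').mp hRd, hd1, hd2⟩
    rw [hA, hR]
    exact hcount

/-- For an asymptotic charge (`s₂ - s₁ > |ν| + ek`), if `|(ν, ∅), s⟩`
has at most one good removable box, whose content is `≡ s₂ (mod e)` whenever it exists,
then the same holds for `|(ν ⊔ 1^{ek}, ∅), s⟩`. -/
theorem append_column_good_removable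
    (e : ℕ) (he : 2 ≤ e) (nu : Partition) (k : ℕ) (s : ℤ × ℤ)
    (hs : (nu.size : ℤ) + (e : ℤ) * k < s.2 - s.1)
    (h1 : ∀ (i i' : ZMod e) (b b' : Box),
      IsGoodRemovable e s (nu, emptyPartition) i b →
      IsGoodRemovable e s (nu, emptyPartition) i' b' → b = b')
    (h2 : ∀ (i : ZMod e) (b : Box),
      IsGoodRemovable e s (nu, emptyPartition) i b →
      (content s b : ZMod e) = ((s.2 : ZMod e))) :
    (∀ (i i' : ZMod e) (b b' : Box),
      IsGoodRemovable e s (appendOnes nu (e * k), emptyPartition) i b →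
      IsGoodRemovable e s (appendOnes nu (e * k), emptyPartition) i' b' → b = b') ∧
    (∀ (i : ZMod e) (b : Box),
      IsGoodRemovable e s (appendOnes nu (e * k), emptyPartition) i b →
      (content s b : ZMod e) = ((s.2 : ZMod e))) := by
  rcases Nat.eq_zero_or_pos k with rfl | hk
  · have heq : appendOnes nu (e * 0) = nu := by
      apply Partition.ext'
      funext x
      rw [appendOnes_part]
      have hz := nu.part_ne_zero_iff x
      split_ifs <;> omega
    rw [heq]
    exact ⟨h1, h2⟩
  · have hm : 1 ≤ e * k := Nat.mul_pos (by omega) hk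
    have hdvd : ((e * k : ℕ) : ZMod e) = 0 := by
      push_cast
      simp [ZMod.natCast_self]
    have hss : s.1 < s.2 := by
      have hp1 : (0 : ℤ) ≤ (nu.size : ℤ) := by positivity
      have hp2 : (0 : ℤ) ≤ (e : ℤ) * k := by positivity
      omega
    have key : ∀ (i : ZMod e) (b : Box),
        IsGoodRemovable e s (appendOnes nu (e * k), emptyPartition) i b →
        (content s b : ZMod e) = ((s.2 : ZMod e)) := by
      intro i b hgb
      obtain ⟨b', hb'⟩ := surviving_transfer hm hdvd hss hgb.1
      obtain ⟨bg, hbg⟩ := exists_good hb'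
      have h3 := h2 i bg hbg
      have h4 : ((content s bg : ℤ) : ZMod e) = i := hbg.1.1.2
      have h5 : ((content s b : ℤ) : ZMod e) = i := hgb.1.1.2
      rw [h5, ← h4]
      exact h3
    refine ⟨?_, key⟩
    intro i i' b b' hg hg'
    have hii : i = i' := by
      have e1 : ((content s b : ℤ) : ZMod e) = i := hg.1.1.2
      have e3 : ((content s b' : ℤ) : ZMod e) = i' := hg'.1.1.2
      rw [← e1, ← e3, key i b hg, key i' b' hg']
    subst hii
    exact boxLE_antisymm (hg.2 b' hg'.1) (hg'.2 b hg.1)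

end GUnBranching
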